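/- The pair (s, E) forms a regular sequence on 𝓡 = ℂ[s,A,B,C,D,E]/I_{sE}: the image of s is not a zero divisor in 𝓡, and the image of E is not a zero divisor in 𝓡/(s). -/

import Mathlib

open MvPolynomial

/-- Variables: `s = X 0`, `A = X 1`, `B = X 2`, `C = X 3`, `D = X 4`, `E = X 5`. -/
noncomputable def n₁ : MvPolynomial (Fin 6) ℂ :=
  ((X 1) ^ 2 + (X 0) ^ 5 * (X 5) ^ 5) * (X 1) ^ 2 - X 2 * X 3

noncomputable def n₂ : MvPolynomial (Fin 6) ℂ :=
  ((X 1) ^ 2 + (X 0) ^ 5 * (X 5) ^ 5) * ((X 2) ^ 2 - X 4) - X 3 * X 4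

noncomputable def n₃ : MvPolynomial (Fin 6) ℂ :=
  X 2 * ((X 2) ^ 2 - X 4) - (X 1) ^ 2 * X 4

/-- The ideal generated by the three 2×2 minors of
`[[A² + s⁵E⁵, B, D], [C, A², B² − D]]`. -/
noncomputable def I_sE : Ideal (MvPolynomial (Fin 6) ℂ) :=
  Ideal.span {n₁, n₂, n₃}

abbrev P6 : Type := MvPolynomial (Fin 6) ℂ

noncomputable def dl (i : Fin 6) : P6 →ₐ[ℂ] P6 :=
  aeval (fun j => if j = i then 0 else X j)

lemma dl_X (i j : Fin 6) : dl i (X j) = if j = i then 0 else X j := by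
  simp [dl]

lemma dl_X_self (i : Fin 6) : dl i (X i) = 0 := by simp [dl_X]

lemma dl_X_ne (i j : Fin 6) (h : j ≠ i) : dl i (X j) = X j := by simp [dl_X, h]

lemma X_dvd_sub_dl (i : Fin 6) (f : P6) : X i ∣ f - dl i f := by
  induction f using MvPolynomial.induction_on with
  | C a => simp [dl]
  | add p q hp hq =>
      have h := dvd_add hp hq
      have h2 : p + q - dl i (p + q) = (p - dl i p) + (q - dl i q) := by
        rw [map_add]; ring
      rwa [h2]
  | mul_X p j hp =>
      by_cases h : j = i
      · subst h
        rw [map_mul, dl_X_self, mul_zero, sub_zero]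
        exact Dvd.intro_left p rfl
      · rw [map_mul, dl_X_ne i j h]
        have h2 : p * X j - dl i p * X j = (p - dl i p) * X j := by ring
        rw [h2]
        exact hp.mul_right _

lemma X_dvd_iff_dl (i : Fin 6) (f : P6) : X i ∣ f ↔ dl i f = 0 := by
  constructor
  · rintro ⟨t, rfl⟩
    rw [map_mul, dl_X_self, zero_mul]
  · intro h
    have h2 := X_dvd_sub_dl i f
    rwa [h, sub_zero] at h2

lemma prime_X6 (i : Fin 6) : Prime (X i : P6) := by
  refine ⟨X_ne_zero i, ?_, ?_⟩
  · intro hu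
    have h1 : (X i : P6) ∣ 1 := hu.dvd
    rw [X_dvd_iff_dl] at h1
    simp at h1
  · intro a b hab
    rw [X_dvd_iff_dl] at hab ⊢
    rw [X_dvd_iff_dl]
    rw [map_mul] at hab
    exact mul_eq_zero.mp hab

lemma degreeOf_dl (i : Fin 6) (f : P6) : degreeOf i (dl i f) = 0 := by
  induction f using MvPolynomial.induction_on with
  | C a => simp [dl]
  | add p q hp hq =>
      rw [map_add]
      have := degreeOf_add_le i (dl i p) (dl i q)
      omega
  | mul_X p j hp =>
      rw [map_mul, dl_X]
      by_cases h : j = i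
      · simp [h]
      · rw [if_neg h]
        have h1 := degreeOf_mul_le i (dl i p) (X j)
        have h2 : degreeOf i (X j : P6) = 0 := by
          rw [degreeOf_X]; simp [Ne.symm h]
        omega

lemma dl_fix {i : Fin 6} {f : P6} (h : degreeOf i f = 0) : dl i f = f := by
  conv_lhs => rw [f.as_sum]
  rw [map_sum]
  conv_rhs => rw [f.as_sum]
  apply Finset.sum_congr rfl
  intro m hm
  have hmi : m i = 0 := by
    have := monomial_le_degreeOf i hm
    omega
  rw [dl, aeval_monomial, monomial_eq]
  congr 1
  rw [Finsupp.prod, Finsupp.prod]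
  apply Finset.prod_congr rfl
  intro j hj
  have hji : j ≠ i := by
    rintro rfl
    exact (Finsupp.mem_support_iff.mp hj) hmi
  rw [if_neg hji]

lemma dl_idem (i : Fin 6) (f : P6) : dl i (dl i f) = dl i f :=
  dl_fix (degreeOf_dl i f)

lemma degreeOf_neg' (i : Fin 6) (f : P6) : degreeOf i (-f) = degreeOf i f := by
  simp [degreeOf_eq_sup, support_neg]

lemma degreeOf_sub_le' (i : Fin 6) (f g : P6) :
    degreeOf i (f - g) ≤ max (degreeOf i f) (degreeOf i g) := by
  rw [sub_eq_add_neg]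
  have := degreeOf_add_le i f (-g)
  rwa [degreeOf_neg'] at this

-- nonzero / nondivisibility facts
lemma sub24_ne : (X 2 ^ 2 - X 4 : P6) ≠ 0 := by
  intro h
  have h2 := congrArg (dl 2) h
  simp [map_sub, map_pow, dl_X] at h2

lemma h3_ne : (X 2 * (X 2 ^ 2 - X 4) - X 1 ^ 2 * X 4 : P6) ≠ 0 := by
  intro h
  have h2 := congrArg (dl 1) h
  simp [map_sub, map_mul, map_pow, dl_X] at h2
  exact sub24_ne h2

lemma ndvd13 : ¬ (X 1 : P6) ∣ (X 2 * (X 2 ^ 2 - X 4) - X 1 ^ 2 * X 4) := by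
  intro h
  rw [X_dvd_iff_dl] at h
  simp [map_sub, map_mul, map_pow, dl_X] at h
  exact sub24_ne h

lemma ndvd1sub : ¬ (X 1 : P6) ∣ (X 2 ^ 2 - X 4) := by
  intro h
  rw [X_dvd_iff_dl] at h
  simp [map_sub, map_pow, dl_X] at h
  exact sub24_ne h

lemma ndvd42 : ¬ (X 4 : P6) ∣ (X 2) := by
  intro h
  rw [X_dvd_iff_dl] at h
  simp [dl_X] at h

/-- Every syzygy of the three specialized minors is generated by the two
Hilbert–Burch syzygies. -/
lemma syz_aux (n : ℕ) :
    ∀ a b c : P6, degreeOf 3 a ≤ n → degreeOf 3 b ≤ n → degreeOf 3 c ≤ n →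
      a * (X 1 ^ 4 - X 2 * X 3) + b * (X 1 ^ 2 * (X 2 ^ 2 - X 4) - X 3 * X 4)
        + c * (X 2 * (X 2 ^ 2 - X 4) - X 1 ^ 2 * X 4) = 0 →
      ∃ w v : P6,
        a = w * X 4 + v * (X 2 ^ 2 - X 4) ∧
        b = -(w * X 2) - v * X 1 ^ 2 ∧
        c = w * X 1 ^ 2 + v * X 3 := by
  induction n with
  | zero =>
    intro a b c hda hdb hdc heq
    have ha : dl 3 a = a := dl_fix (Nat.le_zero.mp hda)
    have hb : dl 3 b = b := dl_fix (Nat.le_zero.mp hdb)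
    have hc : dl 3 c = c := dl_fix (Nat.le_zero.mp hdc)
    have eqd : a * X 1 ^ 4 + b * (X 1 ^ 2 * (X 2 ^ 2 - X 4))
        + c * (X 2 * (X 2 ^ 2 - X 4) - X 1 ^ 2 * X 4) = 0 := by
      have h0 := congrArg (dl 3) heq
      simp only [map_add, map_mul, map_sub, map_pow, map_zero, dl_X, Fin.reduceEq, reduceIte] at h0
      rw [ha, hb, hc] at h0
      linear_combination h0
    have hC3 : X 3 * (a * X 2 + b * X 4) = 0 := by linear_combination eqd - heq
    have h1' : a * X 2 + b * X 4 = 0 :=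
      (mul_eq_zero.mp hC3).resolve_left (X_ne_zero 3)
    have hdvda : X 4 ∣ a :=
      ((prime_X6 4).2.2 a (X 2) ⟨-b, by linear_combination h1'⟩).resolve_right ndvd42
    obtain ⟨w, haw⟩ := hdvda
    have hb' : b = -(w * X 2) := by
      have h2 : X 4 * (w * X 2 + b) = 0 := by linear_combination h1' - X 2 * haw
      have h3 := (mul_eq_zero.mp h2).resolve_left (X_ne_zero 4)
      linear_combination h3
    have hc' : c = w * X 1 ^ 2 := by
      have h3 : (c - w * X 1 ^ 2) * (X 2 * (X 2 ^ 2 - X 4) - X 1 ^ 2 * X 4) = 0 := by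
        linear_combination eqd - X 1 ^ 4 * haw - (X 1 ^ 2 * (X 2 ^ 2 - X 4)) * hb'
      have h4 := (mul_eq_zero.mp h3).resolve_right h3_ne
      linear_combination h4
    exact ⟨w, 0, by linear_combination haw, by linear_combination hb',
      by linear_combination hc'⟩
  | succ n ih =>
    intro a b c hda hdb hdc heq
    have eqd : dl 3 a * X 1 ^ 4 + dl 3 b * (X 1 ^ 2 * (X 2 ^ 2 - X 4))
        + dl 3 c * (X 2 * (X 2 ^ 2 - X 4) - X 1 ^ 2 * X 4) = 0 := by
      have h0 := congrArg (dl 3) heq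
      simp only [map_add, map_mul, map_sub, map_pow, map_zero, dl_X, Fin.reduceEq, reduceIte] at h0
      linear_combination h0
    -- divisibility chain extracting w
    obtain ⟨c2, hc2⟩ : X 1 ∣ dl 3 c :=
      ((prime_X6 1).2.2 _ _ (⟨-(dl 3 a * X 1 ^ 3 + dl 3 b * (X 1 * (X 2 ^ 2 - X 4))),
        by linear_combination eqd⟩ : X 1 ∣ dl 3 c * (X 2 * (X 2 ^ 2 - X 4) - X 1 ^ 2 * X 4))
        ).resolve_right ndvd13
    have inner : dl 3 a * X 1 ^ 3 + dl 3 b * (X 1 * (X 2 ^ 2 - X 4))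
        + c2 * (X 2 * (X 2 ^ 2 - X 4) - X 1 ^ 2 * X 4) = 0 := by
      have h4 : X 1 * (dl 3 a * X 1 ^ 3 + dl 3 b * (X 1 * (X 2 ^ 2 - X 4))
          + c2 * (X 2 * (X 2 ^ 2 - X 4) - X 1 ^ 2 * X 4)) = 0 := by
        linear_combination eqd - (X 2 * (X 2 ^ 2 - X 4) - X 1 ^ 2 * X 4) * hc2
      exact (mul_eq_zero.mp h4).resolve_left (X_ne_zero 1)
    obtain ⟨w, hw⟩ : X 1 ∣ c2 :=
      ((prime_X6 1).2.2 _ _ (⟨-(dl 3 a * X 1 ^ 2 + dl 3 b * (X 2 ^ 2 - X 4)),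
        by linear_combination inner⟩ : X 1 ∣ c2 * (X 2 * (X 2 ^ 2 - X 4) - X 1 ^ 2 * X 4))
        ).resolve_right ndvd13
    have eq2 : dl 3 a * X 1 ^ 2 + dl 3 b * (X 2 ^ 2 - X 4)
        + w * (X 2 * (X 2 ^ 2 - X 4) - X 1 ^ 2 * X 4) = 0 := by
      have h5 : X 1 * (dl 3 a * X 1 ^ 2 + dl 3 b * (X 2 ^ 2 - X 4)
          + w * (X 2 * (X 2 ^ 2 - X 4) - X 1 ^ 2 * X 4)) = 0 := by
        linear_combination inner - (X 2 * (X 2 ^ 2 - X 4) - X 1 ^ 2 * X 4) * hw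
      exact (mul_eq_zero.mp h5).resolve_left (X_ne_zero 1)
    obtain ⟨t, ht⟩ : X 1 ∣ (dl 3 b + w * X 2) :=
      ((prime_X6 1).2.2 _ _ (⟨-(dl 3 a - w * X 4) * X 1,
        by linear_combination eq2⟩ : X 1 ∣ (dl 3 b + w * X 2) * (X 2 ^ 2 - X 4))
        ).resolve_right ndvd1sub
    have eq3 : (dl 3 a - w * X 4) * X 1 + t * (X 2 ^ 2 - X 4) = 0 := by
      have h6 : X 1 * ((dl 3 a - w * X 4) * X 1 + t * (X 2 ^ 2 - X 4)) = 0 := by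
        linear_combination eq2 - (X 2 ^ 2 - X 4) * ht
      exact (mul_eq_zero.mp h6).resolve_left (X_ne_zero 1)
    obtain ⟨v', hv'⟩ : X 1 ∣ t :=
      ((prime_X6 1).2.2 _ _ (⟨-(dl 3 a - w * X 4),
        by linear_combination eq3⟩ : X 1 ∣ t * (X 2 ^ 2 - X 4))).resolve_right ndvd1sub
    have eq4 : (dl 3 a - w * X 4) + v' * (X 2 ^ 2 - X 4) = 0 := by
      have h7 : X 1 * ((dl 3 a - w * X 4) + v' * (X 2 ^ 2 - X 4)) = 0 := by
        linear_combination eq3 - (X 2 ^ 2 - X 4) * hv'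
      exact (mul_eq_zero.mp h7).resolve_left (X_ne_zero 1)
    -- delta-fixed coefficient extraction
    set w0 : P6 := dl 3 w with hw0
    set v0 : P6 := -(dl 3 v') with hv0
    have hdlw0 : dl 3 w0 = w0 := dl_idem 3 w
    have hdlv0 : dl 3 v0 = v0 := by rw [hv0, map_neg, dl_idem]
    have habar : dl 3 a = w0 * X 4 + v0 * (X 2 ^ 2 - X 4) := by
      have h8 := congrArg (dl 3) eq4
      simp only [map_add, map_sub, map_mul, map_pow, map_zero, dl_X, dl_idem, Fin.reduceEq, reduceIte] at h8
      linear_combination h8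
    have hbbar : dl 3 b = -(w0 * X 2) - v0 * X 1 ^ 2 := by
      have h9 := congrArg (dl 3) ht
      have h10 := congrArg (dl 3) hv'
      simp only [map_add, map_mul, map_pow, dl_X, dl_idem, Fin.reduceEq, reduceIte] at h9 h10
      linear_combination h9 + X 1 * h10
    have hcbar : dl 3 c = w0 * X 1 ^ 2 := by
      have h11 := congrArg (dl 3) hc2
      have h12 := congrArg (dl 3) hw
      simp only [map_mul, dl_X, dl_idem, Fin.reduceEq, reduceIte] at h11 h12
      linear_combination h11 + X 1 * h12
    -- division by X 3
    obtain ⟨a1, ha1⟩ : X 3 ∣ (a - (w0 * X 4 + v0 * (X 2 ^ 2 - X 4))) := by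
      rw [X_dvd_iff_dl, map_sub, map_add, map_mul, map_mul, map_sub, map_pow,
        hdlw0, hdlv0, dl_X_ne 3 4 (by decide), dl_X_ne 3 2 (by decide), habar]
      ring
    obtain ⟨b1, hb1⟩ : X 3 ∣ (b - (-(w0 * X 2) - v0 * X 1 ^ 2)) := by
      rw [X_dvd_iff_dl, map_sub, map_sub, map_neg, map_mul, map_mul, map_pow,
        hdlw0, hdlv0, dl_X_ne 3 2 (by decide), dl_X_ne 3 1 (by decide), hbbar]
      ring
    obtain ⟨c1, hc1⟩ : X 3 ∣ (c - (w0 * X 1 ^ 2 + v0 * X 3)) := by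
      rw [X_dvd_iff_dl, map_sub, map_add, map_mul, map_mul, map_pow,
        hdlw0, hdlv0, dl_X_ne 3 1 (by decide), dl_X_self, hcbar]
      ring
    -- the new smaller syzygy
    have hsyz1 : a1 * (X 1 ^ 4 - X 2 * X 3) + b1 * (X 1 ^ 2 * (X 2 ^ 2 - X 4) - X 3 * X 4)
        + c1 * (X 2 * (X 2 ^ 2 - X 4) - X 1 ^ 2 * X 4) = 0 := by
      have h13 : X 3 * (a1 * (X 1 ^ 4 - X 2 * X 3) + b1 * (X 1 ^ 2 * (X 2 ^ 2 - X 4) - X 3 * X 4)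
          + c1 * (X 2 * (X 2 ^ 2 - X 4) - X 1 ^ 2 * X 4)) = 0 := by
        linear_combination heq - (X 1 ^ 4 - X 2 * X 3) * ha1
          - (X 1 ^ 2 * (X 2 ^ 2 - X 4) - X 3 * X 4) * hb1
          - (X 2 * (X 2 ^ 2 - X 4) - X 1 ^ 2 * X 4) * hc1
      exact (mul_eq_zero.mp h13).resolve_left (X_ne_zero 3)
    -- degree bounds
    have hdw0 : degreeOf 3 w0 = 0 := degreeOf_dl 3 w
    have hdv0 : degreeOf 3 v0 = 0 := by
      rw [hv0, degreeOf_neg']; exact degreeOf_dl 3 v'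
    have hdX1 : degreeOf 3 (X 1 : P6) = 0 := by rw [degreeOf_X, if_neg (by decide)]
    have hdX2 : degreeOf 3 (X 2 : P6) = 0 := by rw [degreeOf_X, if_neg (by decide)]
    have hdX3 : degreeOf 3 (X 3 : P6) = 1 := by rw [degreeOf_X, if_pos rfl]
    have hdX4 : degreeOf 3 (X 4 : P6) = 0 := by rw [degreeOf_X, if_neg (by decide)]
    have hdsub : degreeOf 3 (X 2 ^ 2 - X 4 : P6) = 0 := by
      have := degreeOf_sub_le' 3 (X 2 ^ 2) (X 4)
      have h2 := degreeOf_pow_le 3 (X 2 : P6) 2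
      omega
    have hdX1sq : degreeOf 3 (X 1 ^ 2 : P6) = 0 := by
      have := degreeOf_pow_le 3 (X 1 : P6) 2
      omega
    have bnd : ∀ (x x1 zz : P6), degreeOf 3 x ≤ n + 1 → degreeOf 3 zz ≤ 1 →
        x - zz = X 3 * x1 → degreeOf 3 x1 ≤ n := by
      intro x x1 zz hx hzz hx1
      by_cases h0 : x1 = 0
      · rw [h0]; simp
      · have h1 : x - zz = x1 * X 3 := by rw [hx1]; ring
        have h2 := (degreeOf_mul_X_eq_degreeOf_add_one_iff 3 x1).mpr h0
        have h3 : degreeOf 3 (x - zz) ≤ n + 1 := by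
          have := degreeOf_sub_le' 3 x zz
          omega
        rw [← h1] at h2
        omega
    have hda1 : degreeOf 3 a1 ≤ n := by
      refine bnd a a1 _ hda ?_ ha1
      have q1 := degreeOf_mul_le 3 w0 (X 4)
      have q2 := degreeOf_mul_le 3 v0 (X 2 ^ 2 - X 4)
      have q3 := degreeOf_add_le 3 (w0 * X 4) (v0 * (X 2 ^ 2 - X 4))
      omega
    have hdb1 : degreeOf 3 b1 ≤ n := by
      refine bnd b b1 _ hdb ?_ hb1
      have q1 := degreeOf_mul_le 3 w0 (X 2)
      have q2 := degreeOf_mul_le 3 v0 (X 1 ^ 2)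
      have q3 := degreeOf_sub_le' 3 (-(w0 * X 2)) (v0 * X 1 ^ 2)
      have q4 : degreeOf 3 (-(w0 * X 2)) = degreeOf 3 (w0 * X 2) := degreeOf_neg' _ _
      omega
    have hdc1 : degreeOf 3 c1 ≤ n := by
      refine bnd c c1 _ hdc ?_ hc1
      have q1 := degreeOf_mul_le 3 w0 (X 1 ^ 2)
      have q2 := degreeOf_mul_le 3 v0 (X 3)
      have q3 := degreeOf_add_le 3 (w0 * X 1 ^ 2) (v0 * X 3)
      omega
    obtain ⟨w1, v1, e1, e2, e3⟩ := ih a1 b1 c1 hda1 hdb1 hdc1 hsyz1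
    refine ⟨w0 + X 3 * w1, v0 + X 3 * v1, ?_, ?_, ?_⟩
    · linear_combination ha1 + X 3 * e1
    · linear_combination hb1 + X 3 * e2
    · linear_combination hc1 + X 3 * e3

lemma syz {a b c : P6}
    (heq : a * (X 1 ^ 4 - X 2 * X 3) + b * (X 1 ^ 2 * (X 2 ^ 2 - X 4) - X 3 * X 4)
      + c * (X 2 * (X 2 ^ 2 - X 4) - X 1 ^ 2 * X 4) = 0) :
    ∃ w v : P6,
      a = w * X 4 + v * (X 2 ^ 2 - X 4) ∧
      b = -(w * X 2) - v * X 1 ^ 2 ∧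
      c = w * X 1 ^ 2 + v * X 3 :=
  syz_aux (max (degreeOf 3 a) (max (degreeOf 3 b) (degreeOf 3 c))) a b c
    (le_max_left _ _) (le_trans (le_max_left _ _) (le_max_right _ _))
    (le_trans (le_max_right _ _) (le_max_right _ _)) heq

lemma mem_triple_iff (x : P6) :
    x ∈ Ideal.span {n₁, n₂, n₃} ↔ ∃ p q r : P6, x = p * n₁ + q * n₂ + r * n₃ := by
  constructor
  · intro hx
    rw [Ideal.mem_span_insert] at hx
    obtain ⟨p, y, hy, rfl⟩ := hx
    rw [Ideal.mem_span_insert] at hy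
    obtain ⟨q, z, hz, rfl⟩ := hy
    rw [Ideal.mem_span_singleton'] at hz
    obtain ⟨r, rfl⟩ := hz
    exact ⟨p, q, r, by ring⟩
  · rintro ⟨p, q, r, rfl⟩
    have h1 : n₁ ∈ Ideal.span {n₁, n₂, n₃} := Ideal.subset_span (by simp)
    have h2 : n₂ ∈ Ideal.span {n₁, n₂, n₃} := Ideal.subset_span (by simp)
    have h3 : n₃ ∈ Ideal.span {n₁, n₂, n₃} := Ideal.subset_span (by simp)
    exact Ideal.add_mem _ (Ideal.add_mem _ (Ideal.mul_mem_left _ _ h1)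
      (Ideal.mul_mem_left _ _ h2)) (Ideal.mul_mem_left _ _ h3)

theorem part1 :
    Ideal.Quotient.mk I_sE (X 0) ∈
      nonZeroDivisors (MvPolynomial (Fin 6) ℂ ⧸ I_sE) := by
  rw [mem_nonZeroDivisors_iff_right]
  intro z hz
  obtain ⟨g, rfl⟩ := Ideal.Quotient.mk_surjective z
  rw [← map_mul, Ideal.Quotient.eq_zero_iff_mem] at hz
  rw [Ideal.Quotient.eq_zero_iff_mem]
  rw [I_sE] at hz ⊢
  rw [mem_triple_iff] at hz
  obtain ⟨p, q, r, hrep⟩ := hz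
  simp only [n₁, n₂, n₃] at hrep
  have eqd : dl 0 p * (X 1 ^ 4 - X 2 * X 3) + dl 0 q * (X 1 ^ 2 * (X 2 ^ 2 - X 4) - X 3 * X 4)
      + dl 0 r * (X 2 * (X 2 ^ 2 - X 4) - X 1 ^ 2 * X 4) = 0 := by
    have h0 := congrArg (dl 0) hrep
    simp only [map_add, map_mul, map_sub, map_pow, map_zero, dl_X,
      Fin.reduceEq, reduceIte] at h0
    linear_combination -h0
  obtain ⟨w, v, hp0, hq0, hr0⟩ := syz eqd
  obtain ⟨p1, hp1⟩ := X_dvd_sub_dl 0 p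
  obtain ⟨q1, hq1⟩ := X_dvd_sub_dl 0 q
  obtain ⟨r1, hr1⟩ := X_dvd_sub_dl 0 r
  have key : g * X 0 = (p1 * n₁ + q1 * n₂ + (r1 - X 0 ^ 4 * X 5 ^ 5 * w) * n₃) * X 0 := by
    simp only [n₁, n₂, n₃]
    linear_combination hrep + (((X 1) ^ 2 + (X 0) ^ 5 * (X 5) ^ 5) * (X 1) ^ 2 - X 2 * X 3) * hp1
      + (((X 1) ^ 2 + (X 0) ^ 5 * (X 5) ^ 5) * ((X 2) ^ 2 - X 4) - X 3 * X 4) * hq1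
      + (X 2 * ((X 2) ^ 2 - X 4) - (X 1) ^ 2 * X 4) * hr1
      + (((X 1) ^ 2 + (X 0) ^ 5 * (X 5) ^ 5) * (X 1) ^ 2 - X 2 * X 3) * hp0
      + (((X 1) ^ 2 + (X 0) ^ 5 * (X 5) ^ 5) * ((X 2) ^ 2 - X 4) - X 3 * X 4) * hq0
      + (X 2 * ((X 2) ^ 2 - X 4) - (X 1) ^ 2 * X 4) * hr0
  have hg : g = p1 * n₁ + q1 * n₂ + (r1 - X 0 ^ 4 * X 5 ^ 5 * w) * n₃ :=
    mul_right_cancel₀ (X_ne_zero 0) key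
  rw [hg, mem_triple_iff]
  exact ⟨_, _, _, rfl⟩

lemma sup_eq_quad : I_sE ⊔ Ideal.span {X 0} = Ideal.span {n₁, n₂, n₃, X 0} := by
  rw [I_sE, ← Ideal.span_union]
  congr 1
  ext x
  simp only [Set.mem_union, Set.mem_insert_iff, Set.mem_singleton_iff]
  tauto

lemma mem_quad_iff (x : P6) :
    x ∈ Ideal.span {n₁, n₂, n₃, X 0} ↔
      ∃ p q r d : P6, x = p * n₁ + q * n₂ + r * n₃ + d * X 0 := by
  constructor
  · intro hx
    rw [Ideal.mem_span_insert] at hx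
    obtain ⟨p, y, hy, rfl⟩ := hx
    rw [Ideal.mem_span_insert] at hy
    obtain ⟨q, z, hz, rfl⟩ := hy
    rw [Ideal.mem_span_insert] at hz
    obtain ⟨r, u, hu, rfl⟩ := hz
    rw [Ideal.mem_span_singleton'] at hu
    obtain ⟨d, rfl⟩ := hu
    exact ⟨p, q, r, d, by ring⟩
  · rintro ⟨p, q, r, d, rfl⟩
    have h1 : n₁ ∈ Ideal.span {n₁, n₂, n₃, X 0} := Ideal.subset_span (by simp)
    have h2 : n₂ ∈ Ideal.span {n₁, n₂, n₃, X 0} := Ideal.subset_span (by simp)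
    have h3 : n₃ ∈ Ideal.span {n₁, n₂, n₃, X 0} := Ideal.subset_span (by simp)
    have h4 : (X 0 : P6) ∈ Ideal.span {n₁, n₂, n₃, X 0} := Ideal.subset_span (by simp)
    exact Ideal.add_mem _ (Ideal.add_mem _ (Ideal.add_mem _ (Ideal.mul_mem_left _ _ h1)
      (Ideal.mul_mem_left _ _ h2)) (Ideal.mul_mem_left _ _ h3)) (Ideal.mul_mem_left _ _ h4)

theorem part2 :
    Ideal.Quotient.mk (I_sE ⊔ Ideal.span {X 0}) (X 5) ∈
      nonZeroDivisors (MvPolynomial (Fin 6) ℂ ⧸ (I_sE ⊔ Ideal.span {X 0})) := by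
  rw [mem_nonZeroDivisors_iff_right]
  intro z hz
  obtain ⟨g, rfl⟩ := Ideal.Quotient.mk_surjective z
  rw [← map_mul, Ideal.Quotient.eq_zero_iff_mem] at hz
  rw [Ideal.Quotient.eq_zero_iff_mem]
  rw [sup_eq_quad] at hz ⊢
  rw [mem_quad_iff] at hz
  obtain ⟨p, q, r, d, hrep⟩ := hz
  simp only [n₁, n₂, n₃] at hrep
  have eqd : dl 5 p * (X 1 ^ 4 - X 2 * X 3) + dl 5 q * (X 1 ^ 2 * (X 2 ^ 2 - X 4) - X 3 * X 4)
      + dl 5 r * (X 2 * (X 2 ^ 2 - X 4) - X 1 ^ 2 * X 4) + dl 5 d * X 0 = 0 := by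
    have h0 := congrArg (dl 5) hrep
    simp only [map_add, map_mul, map_sub, map_pow, map_zero, dl_X,
      Fin.reduceEq, reduceIte] at h0
    linear_combination -h0
  obtain ⟨p1, hp1⟩ := X_dvd_sub_dl 5 p
  obtain ⟨q1, hq1⟩ := X_dvd_sub_dl 5 q
  obtain ⟨r1, hr1⟩ := X_dvd_sub_dl 5 r
  obtain ⟨d1, hd1⟩ := X_dvd_sub_dl 5 d
  have key : g * X 5 = (p1 * n₁ + q1 * n₂ + r1 * n₃
      + (d1 + X 0 ^ 4 * X 5 ^ 4 * (dl 5 p * X 1 ^ 2 + dl 5 q * (X 2 ^ 2 - X 4))) * X 0) * X 5 := by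
    simp only [n₁, n₂, n₃]
    linear_combination hrep + (((X 1) ^ 2 + (X 0) ^ 5 * (X 5) ^ 5) * (X 1) ^ 2 - X 2 * X 3) * hp1
      + (((X 1) ^ 2 + (X 0) ^ 5 * (X 5) ^ 5) * ((X 2) ^ 2 - X 4) - X 3 * X 4) * hq1
      + (X 2 * ((X 2) ^ 2 - X 4) - (X 1) ^ 2 * X 4) * hr1
      + X 0 * hd1 + eqd
  have hg : g = p1 * n₁ + q1 * n₂ + r1 * n₃
      + (d1 + X 0 ^ 4 * X 5 ^ 4 * (dl 5 p * X 1 ^ 2 + dl 5 q * (X 2 ^ 2 - X 4))) * X 0 :=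
    mul_right_cancel₀ (X_ne_zero 5) key
  rw [hg, mem_quad_iff]
  exact ⟨_, _, _, _, rfl⟩

/-- `(s, E)` is a regular sequence on `𝓡 = ℂ[s,A,B,C,D,E]/I_{sE}`:
the image of `s` is not a zero divisor in `𝓡`, and the image of `E` is not a
zero divisor in `𝓡/(s) = ℂ[s,A,B,C,D,E]/(I_{sE} + (s))`. -/
theorem stmt_15 :
    Ideal.Quotient.mk I_sE (X 0) ∈
      nonZeroDivisors (MvPolynomial (Fin 6) ℂ ⧸ I_sE) ∧
    Ideal.Quotient.mk (I_sE ⊔ Ideal.span {X 0}) (X 5) ∈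
      nonZeroDivisors
        (MvPolynomial (Fin 6) ℂ ⧸ (I_sE ⊔ Ideal.span {X 0})) := by
  exact ⟨part1, part2⟩
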